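/- arXiv:0904.0102 — 2 statements merged into one kernel-verified Lean document; each statement's English description precedes it below -/
import Mathlib

section
/- Let B ⊂ GL_{2n}(k) be the group of invertible lower triangular matrices acting on alternating (skew-symmetric with zero diagonal) matrices x by p·x = p x ᵗp. Then for each 1 ≤ i ≤ n, the Pfaffian pf_i(x) of the upper-left 2i×2i block satisfies pf_i(p·x) = (p₁₁ ⋯ p_{2i,2i})·pf_i(x) for all p ∈ B. -/
open Matrix

/-- The index `2i + r` in `Fin (2m)`. -/
def pairIdx {m : ℕ} (i : Fin m) (r : Fin 2) : Fin (2 * m) :=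
  ⟨2 * i.val + r.val, by have h1 := i.isLt; have h2 := r.isLt; omega⟩

/-- The Pfaffian of a `2m × 2m` matrix, as the signed sum over perfect matchings
(realized as permutations `σ` with `σ(2i) < σ(2i+1)` and `σ(0) < σ(2) < ⋯`). -/
def pfaffian {k : Type*} [CommRing k] {m : ℕ} (A : Matrix (Fin (2 * m)) (Fin (2 * m)) k) : k :=
  ∑ σ ∈ Finset.univ.filter (fun σ : Equiv.Perm (Fin (2 * m)) =>
      (∀ i : Fin m, σ (pairIdx i 0) < σ (pairIdx i 1)) ∧
      ∀ i j : Fin m, i < j → σ (pairIdx i 0) < σ (pairIdx j 0)),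
    (Equiv.Perm.sign σ : ℤ) • ∏ i : Fin m, A (σ (pairIdx i 0)) (σ (pairIdx i 1))

/-- The Pfaffian of the upper-left `2i × 2i` block. -/
def pf {k : Type*} [CommRing k] {n : ℕ} (i : ℕ) (h : 2 * i ≤ 2 * n)
    (x : Matrix (Fin (2 * n)) (Fin (2 * n)) k) : k :=
  pfaffian (x.submatrix (Fin.castLE h) (Fin.castLE h))

namespace PfAux
def pairEquiv (m : ℕ) : Fin m × Fin 2 ≃ Fin (2 * m) where
  toFun x := pairIdx x.1 x.2
  invFun a := (⟨a.val / 2, by have := a.isLt; omega⟩, ⟨a.val % 2, by omega⟩)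
  left_inv := by
    rintro ⟨⟨l, hl⟩, ⟨r, hr⟩⟩
    simp only [pairIdx]
    ext <;> simp <;> omega
  right_inv := by
    rintro ⟨a, ha⟩
    simp only [pairIdx]
    ext
    simp
    omega
@[simp] lemma pairEquiv_apply {m : ℕ} (l : Fin m) (r : Fin 2) :
    pairEquiv m (l, r) = pairIdx l r := rfl
lemma pairIdx_injective {m : ℕ} {l l' : Fin m} {r r' : Fin 2}
    (h : pairIdx l r = pairIdx l' r') : l = l' ∧ r = r' := by
  have := (pairEquiv m).injective (a₁ := (l, r)) (a₂ := (l', r')) h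
  exact ⟨congrArg Prod.fst this, congrArg Prod.snd this⟩
variable {m : ℕ}
def w (m : ℕ) : Equiv.Perm (Fin (2 * m)) :=
  (pairEquiv m).permCongr (Equiv.prodCongrRight fun _ => Equiv.swap 0 1)
lemma w_pairIdx (l : Fin m) (r : Fin 2) :
    w m (pairIdx l r) = pairIdx l (Equiv.swap 0 1 r) := by
  simp [w, Equiv.permCongr_apply, ← pairEquiv_apply, Equiv.prodCongrRight]
@[simp] lemma w_pairIdx0 (l : Fin m) : w m (pairIdx l 0) = pairIdx l 1 := by
  rw [w_pairIdx, Equiv.swap_apply_left]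
@[simp] lemma w_pairIdx1 (l : Fin m) : w m (pairIdx l 1) = pairIdx l 0 := by
  rw [w_pairIdx, Equiv.swap_apply_right]
lemma fin2_cases (r : Fin 2) : r = 0 ∨ r = 1 := by omega
def canonSet (m : ℕ) : Finset (Equiv.Perm (Fin (2 * m))) :=
  Finset.univ.filter (fun σ : Equiv.Perm (Fin (2 * m)) =>
      (∀ i : Fin m, σ (pairIdx i 0) < σ (pairIdx i 1)) ∧
      ∀ i j : Fin m, i < j → σ (pairIdx i 0) < σ (pairIdx j 0))

-- NEW MATERIAL BELOW --

@[simp] lemma Equiv.Perm.inv_apply_self {α : Type*} (σ : Equiv.Perm α) (x : α) : σ⁻¹ (σ x) = x :=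
  Equiv.Perm.inv_eq_iff_eq.mpr rfl

@[simp] lemma Equiv.Perm.apply_inv_self {α : Type*} (σ : Equiv.Perm α) (x : α) : σ (σ⁻¹ x) = x :=
  (Equiv.eq_symm_apply σ).mp rfl

lemma w_fpf (a : Fin (2 * m)) : w m a ≠ a := by
  obtain ⟨⟨l, r⟩, rfl⟩ := (pairEquiv m).surjective a
  rw [pairEquiv_apply, w_pairIdx]
  intro hcon
  have := (pairIdx_injective hcon).2
  rcases fin2_cases r with rfl | rfl <;> revert this <;> decide

lemma w_invol (a : Fin (2 * m)) : w m (w m a) = a := by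
  obtain ⟨⟨l, r⟩, rfl⟩ := (pairEquiv m).surjective a
  rw [pairEquiv_apply, w_pairIdx, w_pairIdx, Equiv.swap_apply_self]

def frontSet (J : Equiv.Perm (Fin (2 * m))) : Finset (Fin (2 * m)) :=
  Finset.univ.filter (fun a => a < J a)

lemma mem_frontSet {J : Equiv.Perm (Fin (2 * m))} {a : Fin (2 * m)} :
    a ∈ frontSet J ↔ a < J a := by simp [frontSet]

lemma card_frontSet (J : Equiv.Perm (Fin (2 * m))) (hJ1 : ∀ a, J (J a) = a)
    (hJ2 : ∀ a, J a ≠ a) : (frontSet J).card = m := by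
  classical
  set G : Finset (Fin (2 * m)) := Finset.univ.filter (fun a => J a < a) with hG
  have hdisj : Disjoint (frontSet J) G := by
    rw [Finset.disjoint_left]
    intro a haF haG
    rw [mem_frontSet] at haF
    simp only [hG, Finset.mem_filter] at haG
    exact absurd (haF.trans haG.2) (lt_irrefl a)
  have hunion : frontSet J ∪ G = Finset.univ := by
    ext a
    simp only [Finset.mem_union, mem_frontSet, hG, Finset.mem_filter, Finset.mem_univ,
      true_and, iff_true]
    exact (hJ2 a).lt_or_gt.symm.imp id id
  have hcard : (frontSet J).card = G.card := by
    apply Finset.card_bij (fun a _ => J a)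
    · intro a ha
      rw [mem_frontSet] at ha
      simp only [hG, Finset.mem_filter, Finset.mem_univ, true_and, hJ1 a]
      exact ha
    · intro a _ b _ hab
      exact J.injective hab
    · intro b hb
      simp only [hG, Finset.mem_filter, Finset.mem_univ, true_and] at hb
      refine ⟨J b, ?_, hJ1 b⟩
      rw [mem_frontSet, hJ1 b]
      exact hb
  have htot : (frontSet J).card + G.card = 2 * m := by
    rw [← Finset.card_union_of_disjoint hdisj, hunion, Finset.card_univ, Fintype.card_fin]
  omega

noncomputable def canonPerm (J : Equiv.Perm (Fin (2 * m))) (hJ1 : ∀ a, J (J a) = a)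
    (hJ2 : ∀ a, J a ≠ a) : Equiv.Perm (Fin (2 * m)) :=
  (pairEquiv m).symm.trans (Equiv.ofBijective
    (fun x : Fin m × Fin 2 =>
      if x.2 = 0 then (frontSet J).orderEmbOfFin (card_frontSet J hJ1 hJ2) x.1
      else J ((frontSet J).orderEmbOfFin (card_frontSet J hJ1 hJ2) x.1))
    (by
      set mo := (frontSet J).orderEmbOfFin (card_frontSet J hJ1 hJ2) with hmo
      have hmoF : ∀ l, mo l ∈ frontSet J := fun l => (frontSet J).orderEmbOfFin_mem _ l
      have hnotF : ∀ l, J (mo l) ∉ frontSet J := by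
        intro l hcon
        rw [mem_frontSet, hJ1] at hcon
        exact absurd ((mem_frontSet.mp (hmoF l)).trans hcon) (lt_irrefl _)
      have h10 : (1 : Fin 2) ≠ 0 := by decide
      have hinj : Function.Injective (fun x : Fin m × Fin 2 =>
          if x.2 = 0 then mo x.1 else J (mo x.1)) := by
        rintro ⟨l, r⟩ ⟨l', r'⟩ hx
        rcases fin2_cases r with rfl | rfl <;> rcases fin2_cases r' with rfl | rfl <;>
          simp only [if_pos rfl, if_neg h10] at hx
        · rw [Prod.mk.injEq]
          exact ⟨mo.injective hx, rfl⟩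
        · exact absurd (hx ▸ hmoF l) (hnotF l')
        · exact absurd (hx ▸ hmoF l') (hnotF l)
        · rw [Prod.mk.injEq]
          exact ⟨mo.injective (J.injective hx), rfl⟩
      refine (Fintype.bijective_iff_injective_and_card _).2 ⟨hinj, ?_⟩
      rw [Fintype.card_prod, Fintype.card_fin, Fintype.card_fin, Fintype.card_fin]
      omega))

lemma canonPerm_pairIdx0 (J : Equiv.Perm (Fin (2 * m))) (hJ1 : ∀ a, J (J a) = a)
    (hJ2 : ∀ a, J a ≠ a) (l : Fin m) :
    canonPerm J hJ1 hJ2 (pairIdx l 0) =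
      (frontSet J).orderEmbOfFin (card_frontSet J hJ1 hJ2) l := by
  have h : (pairEquiv m).symm (pairIdx l 0) = (l, 0) := by
    rw [← pairEquiv_apply, Equiv.symm_apply_apply]
  simp [canonPerm, h]

lemma canonPerm_pairIdx1 (J : Equiv.Perm (Fin (2 * m))) (hJ1 : ∀ a, J (J a) = a)
    (hJ2 : ∀ a, J a ≠ a) (l : Fin m) :
    canonPerm J hJ1 hJ2 (pairIdx l 1) =
      J ((frontSet J).orderEmbOfFin (card_frontSet J hJ1 hJ2) l) := by
  have h : (pairEquiv m).symm (pairIdx l 1) = (l, 1) := by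
    rw [← pairEquiv_apply, Equiv.symm_apply_apply]
  simp [canonPerm, h]

lemma canonPerm_mem (J : Equiv.Perm (Fin (2 * m))) (hJ1 : ∀ a, J (J a) = a)
    (hJ2 : ∀ a, J a ≠ a) : canonPerm J hJ1 hJ2 ∈ canonSet m := by
  rw [canonSet, Finset.mem_filter]
  refine ⟨Finset.mem_univ _, fun l => ?_, fun l l' hll => ?_⟩
  · rw [canonPerm_pairIdx0, canonPerm_pairIdx1]
    exact mem_frontSet.mp ((frontSet J).orderEmbOfFin_mem _ l)
  · rw [canonPerm_pairIdx0, canonPerm_pairIdx0]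
    exact ((frontSet J).orderEmbOfFin (card_frontSet J hJ1 hJ2)).strictMono hll

lemma canonPerm_conj (J : Equiv.Perm (Fin (2 * m))) (hJ1 : ∀ a, J (J a) = a)
    (hJ2 : ∀ a, J a ≠ a) :
    canonPerm J hJ1 hJ2 * w m * (canonPerm J hJ1 hJ2)⁻¹ = J := by
  set σ := canonPerm J hJ1 hJ2 with hσ
  have key : ∀ (l : Fin m) (r : Fin 2), σ (w m (pairIdx l r)) = J (σ (pairIdx l r)) := by
    intro l r
    rcases fin2_cases r with rfl | rfl
    · rw [w_pairIdx0, canonPerm_pairIdx1, canonPerm_pairIdx0]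
    · rw [w_pairIdx1, canonPerm_pairIdx0, canonPerm_pairIdx1, hJ1]
  apply Equiv.ext
  intro a
  obtain ⟨⟨l, r⟩, hx⟩ := (pairEquiv m).surjective (σ.symm a)
  rw [pairEquiv_apply] at hx
  have : a = σ (pairIdx l r) := by rw [hx, Equiv.apply_symm_apply]
  rw [this]
  simp only [Equiv.Perm.mul_apply, Equiv.Perm.inv_apply_self]
  exact key l r

lemma canonPerm_eq_self (σ : Equiv.Perm (Fin (2 * m))) (hσ : σ ∈ canonSet m)
    (hJ1 : ∀ a, (σ * w m * σ⁻¹) ((σ * w m * σ⁻¹) a) = a)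
    (hJ2 : ∀ a, (σ * w m * σ⁻¹) a ≠ a) :
    canonPerm (σ * w m * σ⁻¹) hJ1 hJ2 = σ := by
  classical
  rw [canonSet, Finset.mem_filter] at hσ
  obtain ⟨-, h1, h2⟩ := hσ
  set J := σ * w m * σ⁻¹ with hJ
  have hJapp : ∀ (l : Fin m) (r : Fin 2), J (σ (pairIdx l r)) = σ (w m (pairIdx l r)) := by
    intro l r
    simp [hJ, Equiv.Perm.mul_apply]
  have hfs : ∀ l : Fin m, σ (pairIdx l 0) ∈ frontSet J := by
    intro l
    rw [mem_frontSet, hJapp, w_pairIdx0]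
    exact h1 l
  have hmono : StrictMono (fun l : Fin m => σ (pairIdx l 0)) := fun l l' h => h2 l l' h
  have huni := Finset.orderEmbOfFin_unique (card_frontSet J hJ1 hJ2) hfs hmono
  have hfront : ∀ l : Fin m,
      (frontSet J).orderEmbOfFin (card_frontSet J hJ1 hJ2) l = σ (pairIdx l 0) := by
    intro l
    rw [← huni]
  apply Equiv.ext
  intro a
  obtain ⟨⟨l, r⟩, hx⟩ := (pairEquiv m).surjective a
  rw [pairEquiv_apply] at hx
  subst hx
  rcases fin2_cases r with rfl | rfl
  · rw [canonPerm_pairIdx0, hfront]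
  · rw [canonPerm_pairIdx1, hfront, hJapp, w_pairIdx0]

variable {K : Type*} [CommRing K]
def pfTerm (B : Matrix (Fin (2 * m)) (Fin (2 * m)) K) (σ : Equiv.Perm (Fin (2 * m))) : K :=
  (Equiv.Perm.sign σ : ℤ) • ∏ l : Fin m, B (σ (pairIdx l 0)) (σ (pairIdx l 1))

lemma pfaffian_eq (B : Matrix (Fin (2 * m)) (Fin (2 * m)) K) :
    pfaffian B = ∑ σ ∈ canonSet m, pfTerm B σ := rfl


lemma fin2_swap_of_ne {r s : Fin 2} (h : r ≠ s) : s = Equiv.swap 0 1 r := by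
  revert h; revert r s; decide

lemma pfTerm_eq_of_conj (B : Matrix (Fin (2 * m)) (Fin (2 * m)) K)
    (hB : ∀ a b, B b a = - B a b) (σ₁ σ₂ : Equiv.Perm (Fin (2 * m)))
    (h : σ₁ * w m * σ₁⁻¹ = σ₂ * w m * σ₂⁻¹) : pfTerm B σ₁ = pfTerm B σ₂ := by
  classical
  set ρ : Equiv.Perm (Fin (2 * m)) := σ₁⁻¹ * σ₂ with hρ
  have hσ₂ : σ₂ = σ₁ * ρ := by rw [hρ]; group
  have hcomm : ∀ a, ρ (w m a) = w m (ρ a) := by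
    intro a
    have h' : w m * σ₁⁻¹ * σ₂ = σ₁⁻¹ * σ₂ * w m := by
      have : σ₁⁻¹ * (σ₁ * w m * σ₁⁻¹) * σ₂ = σ₁⁻¹ * (σ₂ * w m * σ₂⁻¹) * σ₂ := by rw [h]
      calc w m * σ₁⁻¹ * σ₂ = σ₁⁻¹ * (σ₁ * w m * σ₁⁻¹) * σ₂ := by group
        _ = σ₁⁻¹ * (σ₂ * w m * σ₂⁻¹) * σ₂ := this
        _ = σ₁⁻¹ * σ₂ * w m := by group
    have := congrArg (fun τ : Equiv.Perm (Fin (2 * m)) => τ a) h'.symm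
    simpa [hρ, Equiv.Perm.mul_apply] using this
  set ρ' : Equiv.Perm (Fin m × Fin 2) := (pairEquiv m).symm.permCongr ρ with hρ'
  have hρ'app : ∀ x : Fin m × Fin 2, ρ (pairIdx x.1 x.2) = pairEquiv m (ρ' x) := by
    intro x
    simp [hρ', Equiv.permCongr_apply, ← pairEquiv_apply]
  set π : Fin m → Fin m := fun l => (ρ' (l, 0)).1 with hπ
  set v : Fin m → Fin 2 := fun l => (ρ' (l, 0)).2 with hv
  have hρ0 : ∀ l, ρ (pairIdx l 0) = pairIdx (π l) (v l) := by
    intro l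
    rw [show pairIdx l (0 : Fin 2) = pairIdx (l, (0 : Fin 2)).1 (l, (0 : Fin 2)).2 from rfl,
      hρ'app]
    rfl
  have hρ1 : ∀ l, ρ (pairIdx l 1) = pairIdx (π l) (Equiv.swap 0 1 (v l)) := by
    intro l
    rw [← w_pairIdx0 l, hcomm, hρ0, w_pairIdx]
  have hπinj : Function.Injective π := by
    intro l l' hll
    rcases eq_or_ne (v l) (v l') with hvv | hvv
    · have : ρ (pairIdx l 0) = ρ (pairIdx l' 0) := by rw [hρ0, hρ0, hll, hvv]
      exact (pairIdx_injective (ρ.injective this)).1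
    · have hv' : v l' = Equiv.swap 0 1 (v l) := fin2_swap_of_ne hvv
      have : ρ (pairIdx l' 0) = ρ (pairIdx l 1) := by rw [hρ0, hρ1, hll, hv']
      have := pairIdx_injective (ρ.injective this)
      exact absurd this.2 (by decide)
  have hπbij : Function.Bijective π := Finite.injective_iff_bijective.mp hπinj
  set πe : Equiv.Perm (Fin m) := Equiv.ofBijective π hπbij with hπe
  set z : Fin m → Equiv.Perm (Fin 2) :=
    fun l => if v l = 0 then Equiv.refl _ else Equiv.swap 0 1 with hz
  have hz0 : ∀ l, z l 0 = v l := by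
    intro l; rcases fin2_cases (v l) with h0 | h0 <;> simp [hz, h0]
  have hz1 : ∀ l, z l 1 = Equiv.swap 0 1 (v l) := by
    intro l; rcases fin2_cases (v l) with h0 | h0 <;> simp [hz, h0] <;> decide
  have hρdec : ρ = (pairEquiv m).permCongr
      ((Equiv.prodCongrRight z).trans (Equiv.prodCongrLeft fun _ : Fin 2 => πe)) := by
    apply Equiv.ext
    intro a
    obtain ⟨⟨l, r⟩, rfl⟩ := (pairEquiv m).surjective a
    rcases fin2_cases r with rfl | rfl
    · rw [pairEquiv_apply, hρ0]
      simp [Equiv.permCongr_apply, Equiv.prodCongrRight, Equiv.prodCongrLeft, hz0, hπe,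
        ← pairEquiv_apply]
    · rw [pairEquiv_apply, hρ1]
      simp [Equiv.permCongr_apply, Equiv.prodCongrRight, Equiv.prodCongrLeft, hz1, hπe,
        ← pairEquiv_apply]
  have hsignρ : Equiv.Perm.sign ρ = ∏ l : Fin m, Equiv.Perm.sign (z l) := by
    rw [hρdec, Equiv.Perm.sign_permCongr]
    rw [show (Equiv.prodCongrRight z).trans (Equiv.prodCongrLeft fun _ : Fin 2 => πe)
        = (Equiv.prodCongrLeft fun _ : Fin 2 => πe) * (Equiv.prodCongrRight z) from rfl]
    rw [Equiv.Perm.sign_mul, Equiv.Perm.sign_prodCongrLeft, Equiv.Perm.sign_prodCongrRight,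
      Fin.prod_univ_two]
    rcases Int.units_eq_one_or (Equiv.Perm.sign πe) with hu | hu <;> rw [hu] <;> simp
  -- now compute the term
  have happ : ∀ l r, σ₂ (pairIdx l r) = σ₁ (ρ (pairIdx l r)) := by
    intro l r; rw [hσ₂]; rfl
  have hfactor : ∀ l, B (σ₂ (pairIdx l 0)) (σ₂ (pairIdx l 1))
      = ((Equiv.Perm.sign (z l) : ℤ) : K) *
        B (σ₁ (pairIdx (πe l) 0)) (σ₁ (pairIdx (πe l) 1)) := by
    intro l
    rw [happ, happ, hρ0, hρ1]
    have hπel : πe l = π l := rfl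
    rcases fin2_cases (v l) with h0 | h0
    · rw [h0]
      have : z l = Equiv.refl (Fin 2) := by simp [hz, h0]
      rw [this]
      simp [hπel]
    · rw [h0]
      have : z l = Equiv.swap 0 1 := by simp [hz, h0]
      rw [this]
      have hs : Equiv.Perm.sign (Equiv.swap (0 : Fin 2) 1) = -1 :=
        Equiv.Perm.sign_swap (by decide)
      rw [hs]
      have : Equiv.swap (0 : Fin 2) 1 1 = 0 := by decide
      rw [this]
      rw [hB (σ₁ (pairIdx (π l) 0)) (σ₁ (pairIdx (π l) 1))]
      push_cast
      ring_nf
      rw [hπel]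
  have hprod : ∏ l : Fin m, B (σ₂ (pairIdx l 0)) (σ₂ (pairIdx l 1))
      = (∏ l : Fin m, ((Equiv.Perm.sign (z l) : ℤ) : K)) *
        ∏ l : Fin m, B (σ₁ (pairIdx l 0)) (σ₁ (pairIdx l 1)) := by
    rw [Finset.prod_congr rfl fun l _ => hfactor l, Finset.prod_mul_distrib]
    congr 1
    exact Equiv.prod_comp πe fun l => B (σ₁ (pairIdx l 0)) (σ₁ (pairIdx l 1))
  have hsign2 : Equiv.Perm.sign σ₂ = Equiv.Perm.sign σ₁ * Equiv.Perm.sign ρ := by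
    rw [hσ₂, Equiv.Perm.sign_mul]
  have this1 : ∀ l : Fin m, (((Equiv.Perm.sign (z l) : ℤ) : K) * ((Equiv.Perm.sign (z l) : ℤ) : K))
      = 1 := by
    intro l
    rcases Int.units_eq_one_or (Equiv.Perm.sign (z l)) with hu | hu <;> rw [hu] <;> norm_num
  have hZZ : (∏ l : Fin m, ((Equiv.Perm.sign (z l) : ℤ) : K)) *
      (∏ l : Fin m, ((Equiv.Perm.sign (z l) : ℤ) : K)) = 1 := by
    rw [← Finset.prod_mul_distrib, Finset.prod_congr rfl fun l _ => this1 l,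
      Finset.prod_const_one]
  rw [pfTerm, pfTerm, hprod, hsign2, hsignρ]
  rw [zsmul_eq_mul, zsmul_eq_mul]
  push_cast
  set s : K := ((Equiv.Perm.sign σ₁ : ℤ) : K) with hs
  set Z : K := ∏ l : Fin m, ((Equiv.Perm.sign (z l) : ℤ) : K) with hZ
  set P : K := ∏ l : Fin m, B (σ₁ (pairIdx l 0)) (σ₁ (pairIdx l 1)) with hP
  linear_combination (-(s * P)) * hZZ

lemma canonPerm_congr {J J' : Equiv.Perm (Fin (2 * m))} (h : J = J')
    (hJ1 : ∀ a, J (J a) = a) (hJ2 : ∀ a, J a ≠ a)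
    (hJ1' : ∀ a, J' (J' a) = a) (hJ2' : ∀ a, J' a ≠ a) :
    canonPerm J hJ1 hJ2 = canonPerm J' hJ1' hJ2' := by subst h; rfl


variable {K' : Type*} [CommRing K']

lemma pfaffian_zero_of_swap (B : Matrix (Fin (2 * m)) (Fin (2 * m)) K')
    (i j : Fin (2 * m)) (hij : i ≠ j)
    (hB : ∀ a b, B b a = - B a b)
    (hInv : ∀ a b, B (Equiv.swap i j a) (Equiv.swap i j b) = B a b)
    (h0 : B i j = 0) :
    (∑ σ ∈ canonSet m, pfTerm B σ) = 0 := by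
  classical
  have hττ : ∀ a, Equiv.swap i j (Equiv.swap i j a) = a := fun a => Equiv.swap_apply_self i j a
  have hι1 : ∀ (σ : Equiv.Perm (Fin (2 * m))) a, (σ * w m * σ⁻¹) ((σ * w m * σ⁻¹) a) = a := by
    intro σ a
    simp only [Equiv.Perm.mul_apply, Equiv.Perm.inv_apply_self]
    rw [w_invol, Equiv.Perm.apply_inv_self]
  have hι2 : ∀ (σ : Equiv.Perm (Fin (2 * m))) a, (σ * w m * σ⁻¹) a ≠ a := by
    intro σ a hcon
    simp only [Equiv.Perm.mul_apply] at hcon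
    have : w m (σ⁻¹ a) = σ⁻¹ a := by
      apply σ.injective
      rw [hcon, Equiv.Perm.apply_inv_self]
    exact w_fpf _ this
  have hJ1 : ∀ (σ : Equiv.Perm (Fin (2 * m))) a,
      (Equiv.swap i j * (σ * w m * σ⁻¹) * Equiv.swap i j)
        ((Equiv.swap i j * (σ * w m * σ⁻¹) * Equiv.swap i j) a) = a := by
    intro σ a
    simp only [Equiv.Perm.mul_apply]
    rw [hττ, Equiv.Perm.inv_apply_self, w_invol, Equiv.Perm.apply_inv_self, hττ]
  have hJ2 : ∀ (σ : Equiv.Perm (Fin (2 * m))) a,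
      (Equiv.swap i j * (σ * w m * σ⁻¹) * Equiv.swap i j) a ≠ a := by
    intro σ a hcon
    simp only [Equiv.Perm.mul_apply] at hcon
    have : (σ * w m * σ⁻¹) (Equiv.swap i j a) = Equiv.swap i j a := by
      have := congrArg (Equiv.swap i j) hcon
      rwa [hττ] at this
    exact hι2 σ _ this
  apply Finset.sum_involution
    (g := fun σ _ => canonPerm (Equiv.swap i j * (σ * w m * σ⁻¹) * Equiv.swap i j)
      (hJ1 σ) (hJ2 σ))
  · -- f σ + f (g σ) = 0
    intro σ hσ
    have hconj := canonPerm_conj (Equiv.swap i j * (σ * w m * σ⁻¹) * Equiv.swap i j)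
      (hJ1 σ) (hJ2 σ)
    have hτσ : (Equiv.swap i j * σ) * w m * (Equiv.swap i j * σ)⁻¹
        = Equiv.swap i j * (σ * w m * σ⁻¹) * Equiv.swap i j := by
      rw [_root_.mul_inv_rev, Equiv.swap_inv]
      group
    have hA := pfTerm_eq_of_conj B hB
      (canonPerm (Equiv.swap i j * (σ * w m * σ⁻¹) * Equiv.swap i j) (hJ1 σ) (hJ2 σ))
      (Equiv.swap i j * σ) (by rw [hconj, hτσ])
    rw [hA]
    have hprod : ∏ l : Fin m, B ((Equiv.swap i j * σ) (pairIdx l 0))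
        ((Equiv.swap i j * σ) (pairIdx l 1))
        = ∏ l : Fin m, B (σ (pairIdx l 0)) (σ (pairIdx l 1)) :=
      Finset.prod_congr rfl fun l _ => by
        simp only [Equiv.Perm.mul_apply]
        exact hInv _ _
    rw [pfTerm, pfTerm, hprod, Equiv.Perm.sign_mul, Equiv.Perm.sign_swap hij]
    rw [zsmul_eq_mul, zsmul_eq_mul]
    push_cast
    ring
  · -- f σ ≠ 0 → g σ ≠ σ
    intro σ hσ hne hgσ
    apply hne
    have hconj := canonPerm_conj (Equiv.swap i j * (σ * w m * σ⁻¹) * Equiv.swap i j)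
      (hJ1 σ) (hJ2 σ)
    rw [hgσ] at hconj
    -- hconj : σ * w m * σ⁻¹ = swap * (σ * w m * σ⁻¹) * swap
    have hi : (σ * w m * σ⁻¹) i = j := by
      rcases eq_or_ne ((σ * w m * σ⁻¹) i) j with hb | hb
      · exact hb
      · exfalso
        have h1 : (σ * w m * σ⁻¹) j
            = Equiv.swap i j ((σ * w m * σ⁻¹) (Equiv.swap i j j)) := by
          nth_rewrite 1 [hconj]
          simp only [Equiv.Perm.mul_apply]
        rw [Equiv.swap_apply_right] at h1
        have h2 : Equiv.swap i j ((σ * w m * σ⁻¹) i) = (σ * w m * σ⁻¹) i :=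
          Equiv.swap_apply_of_ne_of_ne (hι2 σ i) hb
        rw [h2] at h1
        exact hij ((σ * w m * σ⁻¹).injective h1).symm
    obtain ⟨⟨l₀, r₀⟩, hx⟩ := ((pairEquiv m).trans σ).surjective i
    simp only [Equiv.trans_apply, pairEquiv_apply] at hx
    have hισ : ∀ x, (σ * w m * σ⁻¹) (σ x) = σ (w m x) := by
      intro x
      simp only [Equiv.Perm.mul_apply, Equiv.Perm.inv_apply_self]
    rw [pfTerm]
    rcases fin2_cases r₀ with rfl | rfl
    · have hfac : B (σ (pairIdx l₀ 0)) (σ (pairIdx l₀ 1)) = 0 := by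
        have : σ (pairIdx l₀ 1) = j := by
          rw [← w_pairIdx0, ← hισ, hx, hi]
        rw [hx, this, h0]
      rw [Finset.prod_eq_zero (Finset.mem_univ l₀) hfac, smul_zero]
    · have hfac : B (σ (pairIdx l₀ 0)) (σ (pairIdx l₀ 1)) = 0 := by
        have : σ (pairIdx l₀ 0) = j := by
          rw [← w_pairIdx1, ← hισ, hx, hi]
        rw [hx, this, hB, h0, neg_zero]
      rw [Finset.prod_eq_zero (Finset.mem_univ l₀) hfac, smul_zero]
  · -- g maps into the set
    intro σ hσ
    exact canonPerm_mem _ _ _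
  · -- g ∘ g = id
    intro σ hσ
    have hconj := canonPerm_conj (Equiv.swap i j * (σ * w m * σ⁻¹) * Equiv.swap i j)
      (hJ1 σ) (hJ2 σ)
    have hJJ : Equiv.swap i j *
        (canonPerm (Equiv.swap i j * (σ * w m * σ⁻¹) * Equiv.swap i j) (hJ1 σ) (hJ2 σ)
          * w m *
         (canonPerm (Equiv.swap i j * (σ * w m * σ⁻¹) * Equiv.swap i j) (hJ1 σ) (hJ2 σ))⁻¹)
        * Equiv.swap i j = σ * w m * σ⁻¹ := by
      rw [hconj, ← mul_assoc, ← mul_assoc, Equiv.swap_mul_self, one_mul, mul_assoc,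
        Equiv.swap_mul_self, mul_one]
    rw [canonPerm_congr hJJ _ _ (hι1 σ) (hι2 σ)]
    exact canonPerm_eq_self σ hσ _ _


lemma pfaffian_diag_congr (d : Fin (2 * m) → K') (A : Matrix (Fin (2 * m)) (Fin (2 * m)) K') :
    pfaffian (Matrix.diagonal d * A * (Matrix.diagonal d)ᵀ) = (∏ a, d a) * pfaffian A := by
  classical
  rw [pfaffian_eq, pfaffian_eq, Finset.mul_sum]
  apply Finset.sum_congr rfl
  intro σ _
  have hentry : ∀ a b, (Matrix.diagonal d * A * (Matrix.diagonal d)ᵀ) a b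
      = d a * A a b * d b := by
    intro a b
    rw [Matrix.diagonal_transpose, Matrix.mul_diagonal, Matrix.diagonal_mul]
  have key : ∏ l : Fin m, (d (σ (pairIdx l 0)) * d (σ (pairIdx l 1))) = ∏ a, d a := by
    rw [← Equiv.prod_comp ((pairEquiv m).trans σ) d, Fintype.prod_prod_type]
    exact Finset.prod_congr rfl fun l _ => by rw [Fin.prod_univ_two]; rfl
  have hsplit : ∏ l : Fin m,
      (Matrix.diagonal d * A * (Matrix.diagonal d)ᵀ) (σ (pairIdx l 0)) (σ (pairIdx l 1))
      = (∏ l : Fin m, (d (σ (pairIdx l 0)) * d (σ (pairIdx l 1)))) *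
        ∏ l : Fin m, A (σ (pairIdx l 0)) (σ (pairIdx l 1)) := by
    rw [← Finset.prod_mul_distrib]
    exact Finset.prod_congr rfl fun l _ => by rw [hentry]; ring
  rw [pfTerm, pfTerm, hsplit, key, zsmul_eq_mul, zsmul_eq_mul]
  ring

lemma transvection_transpose (i j : Fin (2 * m)) (c : K') :
    (Matrix.transvection i j c)ᵀ = Matrix.transvection j i c := by
  rw [Matrix.transvection, Matrix.transvection, Matrix.transpose_add, Matrix.transpose_one]
  congr 1
  ext a b
  simp [Matrix.single, and_comm]

/-- The matrix obtained from `A` by replacing row and column `i` by row and column `j`. -/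
def lineSub (A : Matrix (Fin (2 * m)) (Fin (2 * m)) K') (i j : Fin (2 * m)) :
    Matrix (Fin (2 * m)) (Fin (2 * m)) K' :=
  Matrix.of fun a b =>
    if a = i then (if b = i then 0 else A j b) else (if b = i then A a j else A a b)

lemma lineSub_ii (A : Matrix (Fin (2 * m)) (Fin (2 * m)) K') (i j : Fin (2 * m)) :
    lineSub A i j i i = 0 := by simp [lineSub]

lemma lineSub_ib (A : Matrix (Fin (2 * m)) (Fin (2 * m)) K') (i j : Fin (2 * m))
    {b : Fin (2 * m)} (hbi : b ≠ i) : lineSub A i j i b = A j b := by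
  simp [lineSub, hbi]

lemma lineSub_ai (A : Matrix (Fin (2 * m)) (Fin (2 * m)) K') (i j : Fin (2 * m))
    {a : Fin (2 * m)} (hai : a ≠ i) : lineSub A i j a i = A a j := by
  simp [lineSub, hai]

lemma lineSub_ab (A : Matrix (Fin (2 * m)) (Fin (2 * m)) K') (i j : Fin (2 * m))
    {a b : Fin (2 * m)} (hai : a ≠ i) (hbi : b ≠ i) : lineSub A i j a b = A a b := by
  simp [lineSub, hai, hbi]

lemma pfaffian_transvection_congr (i j : Fin (2 * m)) (hij : i ≠ j) (c : K')
    (A : Matrix (Fin (2 * m)) (Fin (2 * m)) K')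
    (hA : ∀ a b, A b a = - A a b) (hd : ∀ a, A a a = 0) :
    pfaffian (Matrix.transvection i j c * A * (Matrix.transvection i j c)ᵀ) = pfaffian A := by
  classical
  have hentry : ∀ a b, (Matrix.transvection i j c * A * (Matrix.transvection i j c)ᵀ) a b
      = A a b + (if a = i then c * A j b else 0) + (if b = i then c * A a j else 0) := by
    intro a b
    rw [transvection_transpose]
    by_cases hbi : b = i
    · subst hbi
      rw [Matrix.mul_transvection_apply_same]
      by_cases hai : a = b
      · subst hai
        rw [Matrix.transvection_mul_apply_same, Matrix.transvection_mul_apply_same]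
        rw [if_pos rfl, if_pos rfl, hd j]
        ring
      · rw [Matrix.transvection_mul_apply_of_ne _ _ _ _ hai,
          Matrix.transvection_mul_apply_of_ne _ _ _ _ hai, if_neg hai, if_pos rfl]
        ring
    · rw [Matrix.mul_transvection_apply_of_ne _ _ _ _ hbi]
      by_cases hai : a = i
      · subst hai
        rw [Matrix.transvection_mul_apply_same, if_pos rfl, if_neg hbi]
        ring
      · rw [Matrix.transvection_mul_apply_of_ne _ _ _ _ hai, if_neg hai, if_neg hbi]
        ring
  have hAtil_alt : ∀ a b, lineSub A i j b a = - lineSub A i j a b := by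
    intro a b
    by_cases hai : a = i <;> by_cases hbi : b = i
    · rw [hai, hbi, lineSub_ii, neg_zero]
    · rw [hai, lineSub_ai A i j hbi, lineSub_ib A i j hbi]
      exact hA j b
    · rw [hbi, lineSub_ib A i j hai, lineSub_ai A i j hai]
      exact hA a j
    · rw [lineSub_ab A i j hbi hai, lineSub_ab A i j hai hbi]
      exact hA a b
  have hji : j ≠ i := hij.symm
  have hAtil_swap : ∀ a b,
      lineSub A i j (Equiv.swap i j a) (Equiv.swap i j b) = lineSub A i j a b := by
    intro a b
    have swi : Equiv.swap i j i = j := Equiv.swap_apply_left i j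
    have swj : Equiv.swap i j j = i := Equiv.swap_apply_right i j
    rcases eq_or_ne a i with ha1 | ha1
    · subst ha1
      rcases eq_or_ne b a with hb1 | hb1
      · subst hb1
        rw [swi, lineSub_ab A b j hji hji, lineSub_ii, hd]
      · rcases eq_or_ne b j with hb2 | hb2
        · subst hb2
          rw [swi, swj, lineSub_ai A a b hji, lineSub_ib A a b hji, hd]
        · have hsb : Equiv.swap a j b = b := Equiv.swap_apply_of_ne_of_ne hb1 hb2
          rw [swi, hsb, lineSub_ab A a j hji hb1, lineSub_ib A a j hb1]
    · rcases eq_or_ne a j with ha2 | ha2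
      · subst ha2
        rcases eq_or_ne b i with hb1 | hb1
        · subst hb1
          rw [swj, swi, lineSub_ib A b a hji, lineSub_ai A b a hji, hd]
        · rcases eq_or_ne b a with hb2 | hb2
          · subst hb2
            rw [swj, lineSub_ii, lineSub_ab A i b hji hji, hd]
          · have hsb : Equiv.swap i a b = b := Equiv.swap_apply_of_ne_of_ne hb1 hb2
            rw [swj, hsb, lineSub_ib A i a hb1, lineSub_ab A i a hji hb1]
      · have hsa : Equiv.swap i j a = a := Equiv.swap_apply_of_ne_of_ne ha1 ha2
        rcases eq_or_ne b i with hb1 | hb1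
        · subst hb1
          rw [hsa, swi, lineSub_ab A b j ha1 hji, lineSub_ai A b j ha1]
        · rcases eq_or_ne b j with hb2 | hb2
          · subst hb2
            rw [hsa, swj, lineSub_ai A i b ha1, lineSub_ab A i b ha1 hji]
          · have hsb : Equiv.swap i j b = b := Equiv.swap_apply_of_ne_of_ne hb1 hb2
            rw [hsa, hsb]
  have hzero : (∑ σ ∈ canonSet m, pfTerm (lineSub A i j) σ) = 0 := by
    apply pfaffian_zero_of_swap (lineSub A i j) i j hij hAtil_alt hAtil_swap
    rw [lineSub_ib A i j hji, hd]
  have hterm : ∀ σ ∈ canonSet m,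
      pfTerm (Matrix.transvection i j c * A * (Matrix.transvection i j c)ᵀ) σ
        = pfTerm A σ + c * pfTerm (lineSub A i j) σ := by
    intro σ _
    obtain ⟨⟨l₀, r₀⟩, hx⟩ := ((pairEquiv m).trans σ).surjective i
    simp only [Equiv.trans_apply, pairEquiv_apply] at hx
    have hne : ∀ (l : Fin m) (r : Fin 2), (l, r) ≠ (l₀, r₀) → σ (pairIdx l r) ≠ i := by
      intro l r hlr hcon
      have := pairIdx_injective (σ.injective (hcon.trans hx.symm))
      exact hlr (by rw [this.1, this.2])
    have herase : ∀ (M : Matrix (Fin (2 * m)) (Fin (2 * m)) K'),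
        (∀ a b, a ≠ i → b ≠ i → M a b = A a b) →
        ∏ l ∈ Finset.univ.erase l₀, M (σ (pairIdx l 0)) (σ (pairIdx l 1))
          = ∏ l ∈ Finset.univ.erase l₀, A (σ (pairIdx l 0)) (σ (pairIdx l 1)) := by
      intro M hM
      apply Finset.prod_congr rfl
      intro l hl
      have hll₀ : l ≠ l₀ := (Finset.mem_erase.mp hl).1
      exact hM _ _ (hne l 0 (by simp [hll₀])) (hne l 1 (by simp [hll₀]))
    have hfac : (Matrix.transvection i j c * A * (Matrix.transvection i j c)ᵀ)
          (σ (pairIdx l₀ 0)) (σ (pairIdx l₀ 1))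
        = A (σ (pairIdx l₀ 0)) (σ (pairIdx l₀ 1))
          + c * lineSub A i j (σ (pairIdx l₀ 0)) (σ (pairIdx l₀ 1)) := by
      rcases fin2_cases r₀ with rfl | rfl
      · have hb : σ (pairIdx l₀ 1) ≠ i := hne l₀ 1 (by simp)
        rw [hentry, hx, if_pos rfl, if_neg hb, lineSub_ib A i j hb, add_zero]
      · have ha : σ (pairIdx l₀ 0) ≠ i := hne l₀ 0 (by simp)
        rw [hentry, hx, if_neg ha, if_pos rfl, lineSub_ai A i j ha, add_zero]
    have hprod' : ∏ l : Fin m, (Matrix.transvection i j c * A * (Matrix.transvection i j c)ᵀ)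
          (σ (pairIdx l 0)) (σ (pairIdx l 1))
        = (∏ l : Fin m, A (σ (pairIdx l 0)) (σ (pairIdx l 1)))
          + c * ∏ l : Fin m, lineSub A i j (σ (pairIdx l 0)) (σ (pairIdx l 1)) := by
      rw [← Finset.mul_prod_erase Finset.univ
          (fun l => (Matrix.transvection i j c * A * (Matrix.transvection i j c)ᵀ)
            (σ (pairIdx l 0)) (σ (pairIdx l 1))) (Finset.mem_univ l₀),
        ← Finset.mul_prod_erase Finset.univ
          (fun l => A (σ (pairIdx l 0)) (σ (pairIdx l 1))) (Finset.mem_univ l₀),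
        ← Finset.mul_prod_erase Finset.univ
          (fun l => lineSub A i j (σ (pairIdx l 0)) (σ (pairIdx l 1))) (Finset.mem_univ l₀)]
      have e1 := herase (Matrix.transvection i j c * A * (Matrix.transvection i j c)ᵀ)
        (fun a b hai hbi => by rw [hentry, if_neg hai, if_neg hbi, add_zero, add_zero])
      have e2 := herase (lineSub A i j) (fun a b hai hbi => lineSub_ab A i j hai hbi)
      rw [e1, e2, hfac]
      ring
    rw [pfTerm, pfTerm, pfTerm, hprod', zsmul_eq_mul, zsmul_eq_mul, zsmul_eq_mul]
    ring
  rw [pfaffian_eq, pfaffian_eq, Finset.sum_congr rfl hterm, Finset.sum_add_distrib,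
    ← Finset.mul_sum, hzero, mul_zero, add_zero]

theorem pfaffian_conj {k : Type*} [Field k] (h2 : (2 : k) ≠ 0) {m : ℕ}
    (P : Matrix (Fin (2 * m)) (Fin (2 * m)) k) (hdet : P.det ≠ 0)
    (A : Matrix (Fin (2 * m)) (Fin (2 * m)) k)
    (hA : ∀ a b, A b a = - A a b) (hd : ∀ a, A a a = 0) :
    pfaffian (P * A * Pᵀ) = P.det * pfaffian A := by
  classical
  have main := Matrix.diagonal_transvection_induction_of_det_ne_zero
    (fun M : Matrix (Fin (2 * m)) (Fin (2 * m)) k =>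
      ∀ A : Matrix (Fin (2 * m)) (Fin (2 * m)) k,
        (∀ a b, A b a = - A a b) → (∀ a, A a a = 0) →
        pfaffian (M * A * Mᵀ) = M.det * pfaffian A) P hdet
    (by
      intro D _ A hA hd
      rw [pfaffian_diag_congr, Matrix.det_diagonal])
    (by
      rintro ⟨ti, tj, htij, tc⟩ A hA hd
      rw [Matrix.TransvectionStruct.toMatrix_mk,
        pfaffian_transvection_congr ti tj htij tc A hA hd,
        Matrix.det_transvection_of_ne ti tj htij tc, one_mul])
    (by
      intro M N _ _ pM pN A hA hd
      have halt : ∀ a b, (N * A * Nᵀ) b a = -((N * A * Nᵀ) a b) := by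
        have hAT : Aᵀ = -A := by
          ext a b
          rw [Matrix.transpose_apply, Matrix.neg_apply]
          exact hA a b
        have h1 : (N * A * Nᵀ)ᵀ = -(N * A * Nᵀ) := by
          rw [Matrix.transpose_mul, Matrix.transpose_mul, Matrix.transpose_transpose, hAT,
            Matrix.neg_mul, Matrix.mul_neg, Matrix.mul_assoc]
        intro a b
        calc (N * A * Nᵀ) b a = ((N * A * Nᵀ)ᵀ) a b := (Matrix.transpose_apply _ _ _).symm
          _ = (-(N * A * Nᵀ)) a b := by rw [h1]
          _ = -((N * A * Nᵀ) a b) := Matrix.neg_apply _ _ _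
      have hdg : ∀ a, (N * A * Nᵀ) a a = 0 := by
        intro a
        have h := halt a a
        have h2' : (2 : k) * (N * A * Nᵀ) a a = 0 := by
          rw [two_mul]
          nth_rewrite 2 [h]
          ring
        exact (mul_eq_zero.mp h2').resolve_left h2
      have hassoc : M * N * A * (M * N)ᵀ = M * (N * A * Nᵀ) * Mᵀ := by
        rw [Matrix.transpose_mul]
        simp only [Matrix.mul_assoc]
      rw [hassoc, pM (N * A * Nᵀ) halt hdg, pN A hA hd, Matrix.det_mul]
      ring)
  exact main A hA hd


end PfAux

open PfAux

/-- For `p` invertible lower triangular in `GL_{2n}(k)` (`char k ≠ 2`) acting on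
alternating matrices by `p · x = p x ᵗp`, one has
`pf_i(p·x) = (p₁₁ ⋯ p_{2i,2i}) · pf_i(x)` for `1 ≤ i ≤ n`. -/
theorem stmt_8 {k : Type*} [Field k] (hk : ringChar k ≠ 2) {n : ℕ}
    (p x : Matrix (Fin (2 * n)) (Fin (2 * n)) k)
    (hp : ∀ i j : Fin (2 * n), i < j → p i j = 0) (hpu : IsUnit p.det)
    (hx : x.transpose = -x) (hxd : ∀ i, x i i = 0)
    (i : ℕ) (h1 : 1 ≤ i) (hin : i ≤ n) (h2 : 2 * i ≤ 2 * n) :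
    pf i h2 (p * x * p.transpose) =
      (∏ j : Fin (2 * i), p (Fin.castLE h2 j) (Fin.castLE h2 j)) * pf i h2 x := by
  classical
  have h2k : (2 : k) ≠ 0 := Ring.two_ne_zero hk
  have hxe : ∀ a b, x b a = - x a b := by
    intro a b
    calc x b a = xᵀ a b := (Matrix.transpose_apply _ _ _).symm
      _ = (-x) a b := by rw [hx]
      _ = - x a b := Matrix.neg_apply _ _ _
  have hsum : ∀ (g : Fin (2 * n) → k), (∀ c : Fin (2 * n), 2 * i ≤ c.val → g c = 0) →
      ∑ c, g c = ∑ c : Fin (2 * i), g (Fin.castLE h2 c) := by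
    intro g hg
    rw [← Finset.sum_subset (Finset.subset_univ ((Finset.univ : Finset (Fin (2 * i))).map
      ⟨Fin.castLE h2, Fin.castLE_injective h2⟩)) ?_]
    · rw [Finset.sum_map]
      rfl
    · intro c _ hc
      apply hg
      by_contra hlt
      push_neg at hlt
      refine hc (Finset.mem_map.mpr ⟨⟨c.val, hlt⟩, Finset.mem_univ _, ?_⟩)
      ext
      rfl
  have hblock : (p * x * pᵀ).submatrix (Fin.castLE h2) (Fin.castLE h2)
      = (p.submatrix (Fin.castLE h2) (Fin.castLE h2)) *
        (x.submatrix (Fin.castLE h2) (Fin.castLE h2)) *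
        (p.submatrix (Fin.castLE h2) (Fin.castLE h2))ᵀ := by
    ext a b
    have hInner : ∀ d : Fin (2 * i), (p * x) (Fin.castLE h2 a) (Fin.castLE h2 d)
        = ∑ c : Fin (2 * i), p (Fin.castLE h2 a) (Fin.castLE h2 c) *
            x (Fin.castLE h2 c) (Fin.castLE h2 d) := by
      intro d
      rw [Matrix.mul_apply]
      apply hsum (fun c => p (Fin.castLE h2 a) c * x c (Fin.castLE h2 d))
      intro c hc
      rw [hp _ _ (by rw [Fin.lt_def]; exact lt_of_lt_of_le (by exact a.isLt) hc), zero_mul]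
    have hL : (p * x * pᵀ).submatrix (Fin.castLE h2) (Fin.castLE h2) a b
        = ∑ d : Fin (2 * i), (p * x) (Fin.castLE h2 a) (Fin.castLE h2 d) *
            p (Fin.castLE h2 b) (Fin.castLE h2 d) := by
      rw [Matrix.submatrix_apply, Matrix.mul_apply]
      simp only [Matrix.transpose_apply]
      apply hsum (fun d => (p * x) (Fin.castLE h2 a) d * p (Fin.castLE h2 b) d)
      intro c hc
      rw [hp _ _ (by rw [Fin.lt_def]; exact lt_of_lt_of_le (by exact b.isLt) hc), mul_zero]
    rw [hL, Finset.sum_congr rfl fun d _ => by rw [hInner d]]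
    simp only [Matrix.mul_apply, Matrix.submatrix_apply, Matrix.transpose_apply]
  have hPlowdual : (p.submatrix (Fin.castLE h2) (Fin.castLE h2)).BlockTriangular
      OrderDual.toDual := by
    intro a b hab
    rw [Matrix.submatrix_apply]
    exact hp _ _ (by rw [Fin.lt_def]; exact hab)
  have hplowdual : p.BlockTriangular OrderDual.toDual := fun a b hab => hp _ _ hab
  have hdetp : p.det = ∏ a, p a a := Matrix.det_of_lowerTriangular p hplowdual
  have hdiagp : ∀ a : Fin (2 * n), p a a ≠ 0 := by
    have hne : p.det ≠ 0 := hpu.ne_zero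
    rw [hdetp] at hne
    exact fun a => Finset.prod_ne_zero_iff.mp hne a (Finset.mem_univ a)
  have hdetP : (p.submatrix (Fin.castLE h2) (Fin.castLE h2)).det
      = ∏ j : Fin (2 * i), p (Fin.castLE h2 j) (Fin.castLE h2 j) :=
    Matrix.det_of_lowerTriangular _ hPlowdual
  have hdetPne : (p.submatrix (Fin.castLE h2) (Fin.castLE h2)).det ≠ 0 := by
    rw [hdetP]
    exact Finset.prod_ne_zero_iff.mpr fun j _ => hdiagp _
  have hXalt : ∀ a b, (x.submatrix (Fin.castLE h2) (Fin.castLE h2)) b a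
      = -(x.submatrix (Fin.castLE h2) (Fin.castLE h2)) a b := fun a b => hxe _ _
  have hXd : ∀ a, (x.submatrix (Fin.castLE h2) (Fin.castLE h2)) a a = 0 := fun a => hxd _
  show pfaffian ((p * x * pᵀ).submatrix (Fin.castLE h2) (Fin.castLE h2)) = _
  rw [hblock, pfaffian_conj h2k _ hdetPne _ hXalt hXd, hdetP]
  rfl
end

section
/- In Sp₂(k) = {x ∈ GL₄(k) : ᵗx H₂ x = H₂}, H₂ = [[0,1₂],[−1₂,0]], with the Borel subgroup B of G = Sp₂ × (SL₂)² acting by (g₁,g₂)·x = g₁ x ᵗg₂ (via the standard embedding of (SL₂)² into Sp₂) as described, the function f₄(x) = x₃₁x₄₃ − x₄₁x₃₃ is a relative B-invariant: f₄(b·x) = b₁b₂·f₄(x) where b₁, b₂ are the indicated diagonal parameters of b. -/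
set_option maxRecDepth 8000
set_option maxHeartbeats 1600000


open Matrix

/-- `f₄(x) = x₃₁x₄₃ − x₄₁x₃₃` is a relative invariant of the Borel subgroup of
`Sp₂ × (SL₂)²` acting on `Sp₂` by `(g₁,g₂)·x = g₁ x ᵗg₂`:
`f₄(b·x) = b₁b₂·f₄(x)` for `b` of the indicated block lower-triangular shape with
diagonal parameters `b₁, b₂, b₃, b₄`. -/
theorem stmt_18 {k : Type*} [Field k]
    (H : Matrix (Fin 4) (Fin 4) k)
    (hH : H = !![0, 0, 1, 0; 0, 0, 0, 1; -1, 0, 0, 0; 0, -1, 0, 0])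
    (x : Matrix (Fin 4) (Fin 4) k) (hx : x.transpose * H * x = H)
    (a11 a12 a13 a14 a22 a23 a24 b1 b2 c : k)
    (b3 b4 b3i b4i c1 c2 : k) (hb3 : b3 * b3i = 1) (hb4 : b4 * b4i = 1)
    (g₁ g₂ : Matrix (Fin 4) (Fin 4) k)
    (hg₁ : g₁ = !![a11, a12, a13, a14; 0, a22, a23, a24; 0, 0, b1, 0; 0, 0, c, b2])
    (hg₂ : g₂ = !![b3, 0, 0, 0; 0, b4, 0, 0; c1, 0, b3i, 0; 0, c2, 0, b4i])
    (hg₁Sp : g₁.transpose * H * g₁ = H) (hg₂Sp : g₂.transpose * H * g₂ = H)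
    (f₄ : Matrix (Fin 4) (Fin 4) k → k)
    (hf₄ : ∀ y : Matrix (Fin 4) (Fin 4) k, f₄ y = y 2 0 * y 3 2 - y 3 0 * y 2 2) :
    f₄ (g₁ * x * g₂.transpose) = b1 * b2 * f₄ x := by
  subst hg₁ hg₂
  rw [hf₄, hf₄]
  simp [Matrix.mul_apply, Matrix.vecMul, Matrix.vecHead, Matrix.vecTail, dotProduct, Matrix.transpose_apply, Fin.sum_univ_four]
  linear_combination (b1 * b2 * (x 2 0 * x 3 2 - x 3 0 * x 2 2)) * hb3
end
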